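/- Let Y be a finite set and A ∈ DCCone(Y) nonempty. Then I(A) = 0 if and only if hull(A) ≠ ℝ^Y, where hull(A) denotes the set of all finite convex combinations of elements of A. -/

import Mathlib

open scoped BigOperators

noncomputable section

/-- `A ⊆ ℝ^Y` is a pricing downward closed (DC) cone. -/
def IsDCCone {Y : Type*} (A : Set (Y → ℝ)) : Prop :=
  (∀ a ∈ A, ∀ γ : ℝ, 0 ≤ γ → γ • a ∈ A) ∧
  (∀ a ∈ A, ∀ b : Y → ℝ, (∀ y, 0 ≤ b y) → a - b ∈ A)

/-- Probability mass functions on a finite set `Y`. -/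
def probSimplex (Y : Type*) [Fintype Y] : Set (Y → ℝ) :=
  {p | (∀ y, 0 ≤ p y) ∧ ∑ y, p y = 1}

/-- KL divergence in bits, valued in the extended reals. -/
def KLdiv {Y : Type*} [Fintype Y] (p q : Y → ℝ) : EReal :=
  if ∀ y, q y = 0 → p y = 0 then
    (((∑ y, if p y = 0 then 0 else p y * Real.logb 2 (p y / q y)) : ℝ) : EReal)
  else ⊤

/-- Information capacity `I(A)` of a pricing DC cone `A`.  The conventions
`I(∅) = -∞` and `I(ℝ^Y) = +∞` follow from `⨆ (empty) = ⊥` and `⨅ (empty) = ⊤`. -/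
def infoCap {Y : Type*} [Fintype Y] (A : Set (Y → ℝ)) : EReal :=
  ⨅ q ∈ probSimplex Y, ⨆ a ∈ A,
    ⨅ p ∈ {p ∈ probSimplex Y | ∑ y, p y * a y ≤ 0}, KLdiv p q

set_option linter.unusedSectionVars false

section Aux

variable {Y : Type*} [Fintype Y] {A : Set (Y → ℝ)}

/-- Gibbs' inequality, nats version, allowing subprobability `r`. -/
private lemma gibbs (p r : Y → ℝ) (hp : p ∈ probSimplex Y) (hr0 : ∀ y, 0 ≤ r y)
    (hrs : ∑ y, r y ≤ 1) (hsupp : ∀ y, r y = 0 → p y = 0) :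
    0 ≤ ∑ y, if p y = 0 then 0 else p y * Real.log (p y / r y) := by
  have key : ∀ y, (p y - if p y = 0 then 0 else r y)
      ≤ (if p y = 0 then 0 else p y * Real.log (p y / r y)) := by
    intro y
    by_cases h : p y = 0
    · simp [h]
    · simp only [h, if_false]
      have hpy : 0 < p y := lt_of_le_of_ne (hp.1 y) (Ne.symm h)
      have hry : 0 < r y := lt_of_le_of_ne (hr0 y) (fun e => h (hsupp y e.symm))
      have h1 : Real.log (r y / p y) ≤ r y / p y - 1 :=
        Real.log_le_sub_one_of_pos (div_pos hry hpy)
      have h2 : Real.log (p y / r y) = - Real.log (r y / p y) := by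
        rw [← Real.log_inv, inv_div]
      have h3 : 1 - r y / p y ≤ Real.log (p y / r y) := by rw [h2]; linarith
      calc p y - r y = p y * (1 - r y / p y) := by field_simp
        _ ≤ p y * Real.log (p y / r y) := mul_le_mul_of_nonneg_left h3 hpy.le
  have hsum := Finset.sum_le_sum (s := Finset.univ) (fun y _ => key y)
  have e1 : ∑ y, (p y - if p y = 0 then 0 else r y)
      = 1 - ∑ y, (if p y = 0 then 0 else r y) := by
    rw [Finset.sum_sub_distrib, hp.2]
  have e2 : ∑ y, (if p y = 0 then (0:ℝ) else r y) ≤ 1 := by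
    refine le_trans (Finset.sum_le_sum (fun y _ => ?_)) hrs
    split <;> [exact hr0 y; exact le_rfl]
  calc (0:ℝ) ≤ 1 - ∑ y, (if p y = 0 then 0 else r y) := by linarith
    _ = ∑ y, (p y - if p y = 0 then 0 else r y) := e1.symm
    _ ≤ _ := hsum

private lemma logb_sum_eq (p q : Y → ℝ) :
    (∑ y, if p y = 0 then (0:ℝ) else p y * Real.logb 2 (p y / q y))
      = (∑ y, if p y = 0 then (0:ℝ) else p y * Real.log (p y / q y)) / Real.log 2 := by
  rw [Finset.sum_div]
  refine Finset.sum_congr rfl fun y _ => ?_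
  by_cases h : p y = 0
  · simp [h]
  · simp only [h, if_false, Real.logb, div_eq_mul_inv, mul_assoc]

private lemma KLdiv_nonneg (p q : Y → ℝ) (hp : p ∈ probSimplex Y) (hq : q ∈ probSimplex Y) :
    0 ≤ KLdiv p q := by
  unfold KLdiv
  split
  · rename_i hsupp
    rw [← EReal.coe_zero, EReal.coe_le_coe_iff, logb_sum_eq]
    have := gibbs p q hp hq.1 hq.2.le hsupp
    positivity
  · exact le_top

private lemma KLdiv_self (q : Y → ℝ) : KLdiv q q = 0 := by
  unfold KLdiv
  rw [if_pos (fun y h => h)]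
  norm_cast
  refine Finset.sum_eq_zero fun y _ => ?_
  by_cases h : q y = 0
  · simp [h]
  · simp [h, div_self h]

/-- Donsker–Varadhan style lower bound on the KL divergence. -/
private lemma kl_lb (p q a : Y → ℝ) (hp : p ∈ probSimplex Y) (hq : q ∈ probSimplex Y)
    {M : ℝ} (hM1 : 1 ≤ M) (hMa : ∀ y, |a y| ≤ M)
    (hqa : 1 ≤ ∑ y, q y * a y) (hpa : ∑ y, p y * a y ≤ 0) :
    ((-Real.log (1 - 1/(4*M^2)) / Real.log 2 : ℝ) : EReal) ≤ KLdiv p q := by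
  have hM0 : (0:ℝ) < M := lt_of_lt_of_le one_pos hM1
  unfold KLdiv
  split
  case isFalse => exact le_top
  case isTrue hsupp =>
  rw [EReal.coe_le_coe_iff, logb_sum_eq]
  set S := ∑ y, if p y = 0 then (0:ℝ) else p y * Real.log (p y / q y) with hS
  have hc0 : (0:ℝ) < 1 - 1/(4*M^2) := by
    have h4M : (4:ℝ) ≤ 4*M^2 := by nlinarith
    have := one_div_le_one_div_of_le (by norm_num : (0:ℝ) < 4) h4M
    linarith
  suffices h : -Real.log (1 - 1/(4*M^2)) ≤ S by
    exact (div_le_div_iff_of_pos_right (by positivity : (0:ℝ) < Real.log 2)).2 h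
  set t : ℝ := 1/(2*M^2) with ht_def
  have ht : 0 < t := by positivity
  set Z : ℝ := ∑ y, q y * Real.exp (-(t * a y)) with hZ_def
  have hZpos : 0 < Z := by
    have h1 : ∀ y ∈ Finset.univ, q y * Real.exp (-(t*M)) ≤ q y * Real.exp (-(t * a y)) := by
      intro y _
      refine mul_le_mul_of_nonneg_left (Real.exp_le_exp.2 ?_) (hq.1 y)
      have := (abs_le.1 (hMa y)).2
      nlinarith
    have h2 := Finset.sum_le_sum h1
    rw [← Finset.sum_mul, hq.2, one_mul] at h2
    exact lt_of_lt_of_le (Real.exp_pos _) h2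
  have hZle : Z ≤ 1 - 1/(4*M^2) := by
    have h1 : ∀ y ∈ Finset.univ,
        q y * Real.exp (-(t * a y)) ≤ q y - t*(q y * a y) + (3/4)*t^2*M^2*q y := by
      intro y _
      have hx : |(-(t * a y))| ≤ 1 := by
        rw [abs_neg, abs_mul, abs_of_pos ht]
        calc t * |a y| ≤ t * M := mul_le_mul_of_nonneg_left (hMa y) ht.le
          _ = 1/(2*M) := by rw [ht_def]; field_simp
          _ ≤ 1 := by rw [div_le_one (by linarith)]; linarith
      have hb := Real.exp_bound hx (by norm_num : 0 < 2)
      have hb2 : Real.exp (-(t * a y)) ≤ 1 + (-(t * a y)) + (3/4) * (t * a y)^2 := by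
        have h2 : ∑ m ∈ Finset.range 2, (-(t * a y)) ^ m / (m.factorial : ℝ)
            = 1 + (-(t * a y)) := by
          simp [Finset.sum_range_succ]
        rw [h2] at hb
        have := (abs_le.1 hb).2
        have hsq : |(-(t * a y))| ^ 2 = (t * a y)^2 := by
          rw [sq_abs]; ring
        rw [hsq] at this
        norm_num at this ⊢
        nlinarith
      have hqy := hq.1 y
      have haM : (a y)^2 ≤ M^2 := by
        have := abs_le.1 (hMa y); nlinarith
      nlinarith [mul_le_mul_of_nonneg_left hb2 hqy,
        mul_le_mul_of_nonneg_left haM (mul_nonneg (sq_nonneg t) hqy)]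
    have h2 := Finset.sum_le_sum h1
    rw [hZ_def]
    have h3 : ∑ y, (q y - t*(q y * a y) + (3/4)*t^2*M^2*q y)
        = 1 - t * (∑ y, q y * a y) + (3/4)*t^2*M^2 := by
      rw [Finset.sum_add_distrib, Finset.sum_sub_distrib, hq.2, ← Finset.mul_sum,
        ← Finset.mul_sum, hq.2]
      ring
    rw [h3] at h2
    have h4 : 1 - t * (∑ y, q y * a y) + (3/4)*t^2*M^2 ≤ 1 - t + (3/4)*t^2*M^2 := by
      nlinarith
    have h5 : 1 - t + (3/4)*t^2*M^2 ≤ 1 - 1/(4*M^2) := by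
      rw [ht_def]
      have : (0:ℝ) < M^2 := by positivity
      field_simp
      nlinarith
    linarith
  -- change of measure
  set r : Y → ℝ := fun y => q y * Real.exp (-(t * a y)) / Z with hr_def
  have hr0 : ∀ y, 0 ≤ r y := fun y =>
    div_nonneg (mul_nonneg (hq.1 y) (Real.exp_pos _).le) hZpos.le
  have hrs : ∑ y, r y = 1 := by
    rw [hr_def]
    simp only
    rw [← Finset.sum_div, ← hZ_def, div_self hZpos.ne']
  have hsupp' : ∀ y, r y = 0 → p y = 0 := by
    intro y hy
    apply hsupp
    rw [hr_def] at hy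
    simp only [div_eq_zero_iff, mul_eq_zero] at hy
    rcases hy with (h | h) | h
    · exact h
    · exact absurd h (Real.exp_pos _).ne'
    · exact absurd h hZpos.ne'
  have G := gibbs p r hp hr0 hrs.le hsupp'
  have key : ∑ y, (if p y = 0 then (0:ℝ) else p y * Real.log (p y / r y))
      = S + t * (∑ y, p y * a y) + Real.log Z := by
    have e1 : ∀ y, (if p y = 0 then (0:ℝ) else p y * Real.log (p y / r y))
        = (if p y = 0 then (0:ℝ) else p y * Real.log (p y / q y))
          + t * (p y * a y) + p y * Real.log Z := by
      intro y
      by_cases h : p y = 0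
      · simp [h]
      · simp only [h, if_false]
        have hpy : 0 < p y := lt_of_le_of_ne (hp.1 y) (Ne.symm h)
        have hqy : q y ≠ 0 := fun e => h (hsupp y e)
        have hqy' : 0 < q y := lt_of_le_of_ne (hq.1 y) (Ne.symm hqy)
        have hrw : p y / r y = (p y / q y) * Real.exp (t * a y) * Z := by
          rw [hr_def]
          simp only
          rw [Real.exp_neg]
          field_simp
        rw [hrw, Real.log_mul (by positivity) hZpos.ne', Real.log_mul (by positivity)
          (Real.exp_pos _).ne', Real.log_exp]
        ring
    rw [Finset.sum_congr rfl (fun y _ => e1 y), Finset.sum_add_distrib, Finset.sum_add_distrib,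
      ← Finset.mul_sum, ← Finset.sum_mul, hp.2, one_mul, hS]
  rw [key] at G
  have hta : t * (∑ y, p y * a y) ≤ 0 := mul_nonpos_of_nonneg_of_nonpos ht.le hpa
  have hlog : Real.log Z ≤ Real.log (1 - 1/(4*M^2)) := Real.log_le_log hZpos hZle
  linarith

private lemma hull_cone (hA : IsDCCone A) {x : Y → ℝ} (hx : x ∈ convexHull ℝ A)
    {γ : ℝ} (hγ : 0 ≤ γ) : γ • x ∈ convexHull ℝ A := by
  have hD : Convex ℝ ((fun z : Y → ℝ => γ • z) ⁻¹' convexHull ℝ A) :=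
    (convex_convexHull ℝ A).is_linear_preimage (IsLinearMap.isLinearMap_smul γ)
  have hsub : A ⊆ (fun z : Y → ℝ => γ • z) ⁻¹' convexHull ℝ A := fun a ha =>
    subset_convexHull ℝ A (hA.1 a ha γ hγ)
  exact convexHull_min hsub hD hx

private lemma hull_dc (hA : IsDCCone A) {x : Y → ℝ} (hx : x ∈ convexHull ℝ A)
    {b : Y → ℝ} (hb : ∀ y, 0 ≤ b y) : x - b ∈ convexHull ℝ A := by
  have hD : Convex ℝ ((fun z : Y → ℝ => z - b) ⁻¹' convexHull ℝ A) := by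
    have : (fun z : Y → ℝ => z - b) = (fun z : Y → ℝ => -b + z) := by
      funext z; abel
    rw [this]
    exact (convex_convexHull ℝ A).translate_preimage_right (-b)
  have hsub : A ⊆ (fun z : Y → ℝ => z - b) ⁻¹' convexHull ℝ A := fun a ha =>
    subset_convexHull ℝ A (hA.2 a ha b hb)
  exact convexHull_min hsub hD hx

private lemma hull_univ_of_one_mem (hA : IsDCCone A)
    (h1 : (fun _ : Y => (1:ℝ)) ∈ convexHull ℝ A) : convexHull ℝ A = Set.univ := by
  ext x
  simp only [Set.mem_univ, iff_true]
  set γ : ℝ := ∑ y, |x y| with hγdef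
  have hγ0 : 0 ≤ γ := Finset.sum_nonneg fun y _ => abs_nonneg _
  have hxy : ∀ y, x y ≤ γ := by
    intro y
    calc x y ≤ |x y| := le_abs_self _
      _ ≤ γ := Finset.single_le_sum (fun z _ => abs_nonneg (x z)) (Finset.mem_univ y)
  have h2 : γ • (fun _ : Y => (1:ℝ)) ∈ convexHull ℝ A := hull_cone hA h1 hγ0
  have h3 := hull_dc hA h2 (b := fun y => γ - x y) (fun y => by simpa using sub_nonneg.2 (hxy y))
  convert h3 using 1
  funext y
  simp [Pi.smul_apply]

private lemma exists_sep (hA : IsDCCone A) (hne : A.Nonempty)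
    (hC : convexHull ℝ A ≠ Set.univ) :
    ∃ q ∈ probSimplex Y, ∀ a ∈ A, ∑ y, q y * a y ≤ 0 := by
  classical
  have h0A : (0 : Y → ℝ) ∈ A := by
    obtain ⟨a, ha⟩ := hne
    simpa using hA.1 a ha 0 le_rfl
  have h0C : (0 : Y → ℝ) ∈ convexHull ℝ A := subset_convexHull ℝ A h0A
  have h1 : (fun _ : Y => (1:ℝ)) ∉ convexHull ℝ A := fun h => hC (hull_univ_of_one_mem hA h)
  have h1c : (fun _ : Y => (1:ℝ)) ∉ closure (convexHull ℝ A) := by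
    intro hcl
    apply h1
    rw [Metric.mem_closure_iff] at hcl
    obtain ⟨z, hzC, hz⟩ := hcl (1/2) (by norm_num)
    have hz2 : ∀ y, (1:ℝ)/2 ≤ z y := by
      intro y
      have h3 : |((fun _ : Y => (1:ℝ)) - z) y| ≤ ‖(fun _ : Y => (1:ℝ)) - z‖ :=
        norm_le_pi_norm ((fun _ : Y => (1:ℝ)) - z) y
      rw [← dist_eq_norm] at h3
      have h4 : |1 - z y| < 1/2 := lt_of_le_of_lt (by simpa using h3) hz
      have := abs_lt.1 h4
      linarith [this.2]
    have hhalf : (fun _ : Y => (1:ℝ)/2) ∈ convexHull ℝ A := by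
      have h5 := hull_dc hA hzC (b := fun y => z y - 1/2)
        (fun y => by simpa using sub_nonneg.2 (hz2 y))
      convert h5 using 1
      funext y; simp
    have h6 := hull_cone hA hhalf (γ := 2) (by norm_num)
    convert h6 using 1
    funext y; norm_num
  obtain ⟨f, u, hfu, hu1⟩ := geometric_hahn_banach_closed_point
    ((convex_convexHull ℝ A).closure) isClosed_closure h1c
  have hu0 : 0 < u := by
    have := hfu 0 (subset_closure h0C)
    simpa using this
  have hfA : ∀ a ∈ A, f a ≤ 0 := by
    intro a ha
    by_contra hpos
    push_neg at hpos
    have h2 := hfu (((u+1)/f a) • a)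
      (subset_closure (subset_convexHull ℝ A (hA.1 a ha _ (by positivity))))
    rw [map_smul, smul_eq_mul, div_mul_cancel₀ _ hpos.ne'] at h2
    linarith
  set e : Y → (Y → ℝ) := fun y => fun j => if y = j then 1 else 0 with he
  have heA : ∀ y, (0 : Y → ℝ) - e y ∈ A := by
    intro y
    refine hA.2 0 h0A (e y) fun j => ?_
    rw [he]; simp only; split <;> norm_num
  have hcy : ∀ y, 0 ≤ f (e y) := by
    intro y
    have := hfA _ (heA y)
    rw [map_sub, map_zero] at this
    linarith
  have hf_repr : ∀ x : Y → ℝ, f x = ∑ y, x y * f (e y) := by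
    intro x
    conv_lhs => rw [pi_eq_sum_univ x, map_sum]
    exact Finset.sum_congr rfl fun y _ => by rw [map_smul, smul_eq_mul]
  set s : ℝ := ∑ y, f (e y) with hs
  have hs_pos : 0 < s := by
    have h7 : f (fun _ : Y => (1:ℝ)) = s := by
      rw [hf_repr]; simp [hs]
    linarith [hu1, h7 ▸ hu1]
  refine ⟨fun y => f (e y) / s, ⟨fun y => div_nonneg (hcy y) hs_pos.le, ?_⟩, ?_⟩
  · rw [← Finset.sum_div, ← hs, div_self hs_pos.ne']
  · intro a ha
    have h8 : ∑ y, (f (e y) / s) * a y = f a / s := by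
      rw [hf_repr a, Finset.sum_div]
      exact Finset.sum_congr rfl fun y _ => by ring
    rw [h8]
    exact div_nonpos_of_nonpos_of_nonneg (hfA a ha) hs_pos.le

end Aux

/-- For a nonempty pricing DC cone `A` over a finite set `Y`, `I(A) = 0` iff the convex
hull of `A` is not all of `ℝ^Y` (i.e. `A` is non-informative). -/
theorem infoCap_eq_zero_iff {Y : Type*} [Fintype Y]
    (A : Set (Y → ℝ)) (hA : IsDCCone A) (hne : A.Nonempty) :
    infoCap A = 0 ↔ convexHull ℝ A ≠ Set.univ := by
  classical
  have h0A : (0 : Y → ℝ) ∈ A := by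
    obtain ⟨a, ha⟩ := hne
    simpa using hA.1 a ha 0 le_rfl
  have hge : 0 ≤ infoCap A := by
    refine le_iInf₂ fun q hq => ?_
    refine le_trans ?_
      (le_iSup₂ (f := fun a (_ : a ∈ A) =>
        ⨅ p ∈ {p ∈ probSimplex Y | ∑ y, p y * a y ≤ 0}, KLdiv p q) 0 h0A)
    refine le_iInf₂ fun p hp => ?_
    exact KLdiv_nonneg p q hp.1 hq
  constructor
  · -- I(A) = 0 → hull ≠ univ; contrapositive
    intro h0 hCuniv
    have h1mem : (fun _ : Y => (1:ℝ)) ∈ convexHull ℝ A := by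
      rw [hCuniv]; trivial
    rw [convexHull_eq] at h1mem
    obtain ⟨ι, tset, w, z, hw0, hw1, hzA, hcm⟩ := h1mem
    have hzsum : ∑ i ∈ tset, w i • z i = (fun _ : Y => (1:ℝ)) := by
      rw [← hcm, Finset.centerMass, hw1, inv_one, one_smul]
    set M : ℝ := 1 + ∑ i ∈ tset, ∑ y, |z i y| with hM_def
    have hM1 : 1 ≤ M := by
      have : (0:ℝ) ≤ ∑ i ∈ tset, ∑ y, |z i y| :=
        Finset.sum_nonneg fun i _ => Finset.sum_nonneg fun y _ => abs_nonneg _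
      linarith
    have hMle : ∀ i ∈ tset, ∀ y, |z i y| ≤ M := by
      intro i hi y
      have h1 : |z i y| ≤ ∑ y, |z i y| :=
        Finset.single_le_sum (fun y _ => abs_nonneg (z i y)) (Finset.mem_univ y)
      have h2 : ∑ y, |z i y| ≤ ∑ i ∈ tset, ∑ y, |z i y| :=
        Finset.single_le_sum (f := fun i => ∑ y, |z i y|)
          (fun i _ => Finset.sum_nonneg fun y _ => abs_nonneg _) hi
      linarith
    set δ : ℝ := -Real.log (1 - 1/(4*M^2)) / Real.log 2 with hδ_def
    have hδ : 0 < δ := by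
      have hM0 : (0:ℝ) < M := lt_of_lt_of_le one_pos hM1
      have h4M : (4:ℝ) ≤ 4*M^2 := by nlinarith
      have hinv := one_div_le_one_div_of_le (by norm_num : (0:ℝ) < 4) h4M
      have hinv0 : (0:ℝ) < 1/(4*M^2) := by positivity
      have hlog : Real.log (1 - 1/(4*M^2)) < 0 :=
        Real.log_neg (by linarith) (by linarith)
      have hl2 : (0:ℝ) < Real.log 2 := by positivity
      rw [hδ_def]
      exact div_pos (neg_pos.2 hlog) hl2
    have hle : (δ : EReal) ≤ infoCap A := by
      refine le_iInf₂ fun q hq => ?_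
      -- find i with ⟨q, z i⟩ ≥ 1
      have hkey : ∃ i ∈ tset, 1 ≤ ∑ y, q y * z i y := by
        by_contra hcon
        push_neg at hcon
        obtain ⟨i₀, hi₀, hwi₀⟩ := Finset.exists_ne_zero_of_sum_ne_zero
          (hw1 ▸ one_ne_zero : ∑ i ∈ tset, w i ≠ 0)
        have hwi₀' : 0 < w i₀ := lt_of_le_of_ne (hw0 i₀ hi₀) (Ne.symm hwi₀)
        have hlt : ∑ i ∈ tset, w i * (∑ y, q y * z i y) < ∑ i ∈ tset, w i := by
          refine Finset.sum_lt_sum (fun i hi => ?_) ⟨i₀, hi₀, ?_⟩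
          · calc w i * (∑ y, q y * z i y) ≤ w i * 1 :=
                mul_le_mul_of_nonneg_left (hcon i hi).le (hw0 i hi)
              _ = w i := mul_one _
          · calc w i₀ * (∑ y, q y * z i₀ y) < w i₀ * 1 :=
                (mul_lt_mul_iff_right₀ hwi₀').2 (hcon i₀ hi₀)
              _ = w i₀ := mul_one _
        have heq : ∑ i ∈ tset, w i * (∑ y, q y * z i y) = 1 := by
          have e1 : ∀ i ∈ tset, w i * (∑ y, q y * z i y) = ∑ y, q y * (w i * z i y) := by
            intro i _
            rw [Finset.mul_sum]
            exact Finset.sum_congr rfl fun y _ => by ring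
          rw [Finset.sum_congr rfl e1, Finset.sum_comm]
          have e2 : ∀ y, ∑ i ∈ tset, q y * (w i * z i y) = q y := by
            intro y
            rw [← Finset.mul_sum]
            have e3 : ∑ i ∈ tset, w i * z i y = 1 := by
              have := congrFun hzsum y
              simpa [Finset.sum_apply] using this
            rw [e3, mul_one]
          rw [Finset.sum_congr rfl (fun y _ => e2 y), hq.2]
        rw [heq, hw1] at hlt
        exact lt_irrefl _ hlt
      obtain ⟨i, hi, hqz⟩ := hkey
      refine le_trans ?_
        (le_iSup₂ (f := fun a (_ : a ∈ A) =>
          ⨅ p ∈ {p ∈ probSimplex Y | ∑ y, p y * a y ≤ 0}, KLdiv p q) (z i) (hzA i hi))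
      refine le_iInf₂ fun p hp => ?_
      exact kl_lb p q (z i) hp.1 hq hM1 (hMle i hi) hqz hp.2
    have hpos : (0 : EReal) < infoCap A :=
      lt_of_lt_of_le (by exact_mod_cast hδ) hle
    rw [h0] at hpos
    exact lt_irrefl _ hpos
  · intro hC
    obtain ⟨q, hq, hqA⟩ := exists_sep hA hne hC
    refine le_antisymm ?_ hge
    refine iInf₂_le_of_le q hq ?_
    refine iSup₂_le fun a ha => ?_
    refine iInf₂_le_of_le q ⟨hq, hqA a ha⟩ ?_
    exact le_of_eq (KLdiv_self q)

end
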